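/- For every Schwartz function f on ℝ^d, the distribution (k²−m²)·δ'^±_m satisfies ((k²−m²)·δ'^±_m)(f) = −δ^±_m(f); that is, multiplication of δ'^±_m by the smooth function k ↦ k²−m² yields −δ^±_m. -/

import Mathlib

open MeasureTheory

/-- Multiplication of `δ'^±_m` by the smooth function `k ↦ k² - m²` yields `-δ^±_m`:
`((k²-m²)·δ'^±_m)(f) = -δ^±_m(f)` for every Schwartz `f` on `ℝ^d = ℝ × ℝ^{d-1}`,
where `δ^±_m(f) = ∫ f(±ω,𝐤)/(2ω) d𝐤` and
`δ'^±_m(f) = -∫ (1/(2ω)) ∂_{k⁰}[f(k⁰,𝐤)/(2k⁰)]|_{k⁰=±ω} d𝐤`. -/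
theorem stmt1 (n : ℕ) (hn : 1 ≤ n) (m : ℝ) (hm : 0 < m)
    (f : SchwartzMap (ℝ × EuclideanSpace ℝ (Fin n)) ℂ)
    (sgn : ℝ) (hsgn : sgn = 1 ∨ sgn = -1) :
    (-∫ k : EuclideanSpace ℝ (Fin n),
      (1 / (2 * (Real.sqrt (‖k‖ ^ 2 + m ^ 2) : ℂ))) *
        deriv (fun k0 : ℝ =>
          ((k0 ^ 2 - ‖k‖ ^ 2 - m ^ 2 : ℝ) : ℂ) * f (k0, k) / (2 * (k0 : ℂ)))
          (sgn * Real.sqrt (‖k‖ ^ 2 + m ^ 2))) =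
    -(∫ k : EuclideanSpace ℝ (Fin n),
        f (sgn * Real.sqrt (‖k‖ ^ 2 + m ^ 2), k) /
          (2 * (Real.sqrt (‖k‖ ^ 2 + m ^ 2) : ℂ))) := by
  congr 1
  apply integral_congr_ae
  filter_upwards with k
  set ω : ℝ := Real.sqrt (‖k‖ ^ 2 + m ^ 2) with hω
  have hpos : 0 < ‖k‖ ^ 2 + m ^ 2 := by positivity
  have hωpos : 0 < ω := Real.sqrt_pos.mpr hpos
  set x : ℝ := sgn * ω with hxdef
  have hx0 : x ≠ 0 := by
    rcases hsgn with h | h <;> simp [hxdef, h] <;> exact ne_of_gt hωpos <;> linarith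
  have hx2 : x ^ 2 = ‖k‖ ^ 2 + m ^ 2 := by
    have : ω ^ 2 = ‖k‖ ^ 2 + m ^ 2 := Real.sq_sqrt hpos.le
    rcases hsgn with h | h <;> rw [hxdef, h] <;> nlinarith
  -- differentiability of f along the line
  have hFdiff : DifferentiableAt ℝ (fun k0 : ℝ => f (k0, k)) x := by
    exact (f.differentiable.comp
      (differentiable_id.prodMk (differentiable_const k))).differentiableAt
  have hF : HasDerivAt (fun k0 : ℝ => f (k0, k))
      (deriv (fun k0 : ℝ => f (k0, k)) x) x := hFdiff.hasDerivAt
  have hden : HasDerivAt (fun k0 : ℝ => (2 * (k0 : ℂ))) 2 x := by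
    simpa using (Complex.ofRealCLM.hasDerivAt (x := x)).const_mul (2 : ℂ)
  have hdenne : (2 * (x : ℂ)) ≠ 0 := by
    simp [Complex.ofReal_ne_zero, hx0]
  have hh : HasDerivAt (fun k0 : ℝ => f (k0, k) / (2 * (k0 : ℂ)))
      ((deriv (fun k0 : ℝ => f (k0, k)) x * (2 * (x : ℂ)) -
        f (x, k) * 2) / (2 * (x : ℂ)) ^ 2) x := hF.div hden hdenne
  have hq : HasDerivAt (fun k0 : ℝ => k0 ^ 2 - ‖k‖ ^ 2 - m ^ 2) (2 * x) x := by
    simpa using (((hasDerivAt_pow 2 x).sub_const (‖k‖ ^ 2)).sub_const (m ^ 2))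
  have hp : HasDerivAt (fun k0 : ℝ => ((k0 ^ 2 - ‖k‖ ^ 2 - m ^ 2 : ℝ) : ℂ))
      ((2 * x : ℝ) : ℂ) x := hq.ofReal_comp
  have hpx : ((x ^ 2 - ‖k‖ ^ 2 - m ^ 2 : ℝ) : ℂ) = 0 := by
    rw [hx2]; push_cast; ring
  have key : HasDerivAt (fun k0 : ℝ =>
      ((k0 ^ 2 - ‖k‖ ^ 2 - m ^ 2 : ℝ) : ℂ) * f (k0, k) / (2 * (k0 : ℂ)))
      (f (x, k)) x := by
    have h1 := hp.mul hh
    have heq : (fun k0 : ℝ =>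
        ((k0 ^ 2 - ‖k‖ ^ 2 - m ^ 2 : ℝ) : ℂ) * f (k0, k) / (2 * (k0 : ℂ))) =
        fun k0 : ℝ =>
        ((k0 ^ 2 - ‖k‖ ^ 2 - m ^ 2 : ℝ) : ℂ) * (f (k0, k) / (2 * (k0 : ℂ))) := by
      funext k0; ring
    rw [heq]
    refine h1.congr_deriv ?_
    rw [hpx]
    field_simp
    have hxc : (x : ℂ) ≠ 0 := by exact_mod_cast hx0
    push_cast
    field_simp
    ring
  rw [key.deriv]
  have hωne : (ω : ℂ) ≠ 0 := by
    simp [Complex.ofReal_ne_zero]; exact ne_of_gt hωpos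
  field_simp
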